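/- arXiv:2503.05435 — 3 statements merged into one kernel-verified Lean document; each statement's English description precedes it below -/
import Mathlib

section
/- Let C be a circle with center M_C and radius R_C, and K a circle with center M_K and radius R_K, with d the distance between M_C and M_K, d ≠ R_K. Let t be a tangent line to C that intersects K in two points P1 and P2. Then the center M_D of the circumcircle of the triangle M_C P1 P2 satisfies dist(M_D, M_K) = |R_K² − d²| / (2 R_C), independent of the choice of tangent t. -/
open EuclideanGeometry Metric

/-- Lemma 2 of the paper: the circumcenter `M_D` of the triangle `M_C P1 P2`,
where `P1 P2` is a chord of `K` on a tangent line `t` of `C`, lies at distance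
`|R_K² - d²| / (2 R_C)` from `M_K`, independent of `t`. -/
theorem excircle_lemma (M_C M_K P1 P2 M_D : EuclideanSpace ℝ (Fin 2)) (R_C R_K : ℝ)
    (hRC : 0 < R_C) (hRK : 0 < R_K)
    (t : AffineSubspace ℝ (EuclideanSpace ℝ (Fin 2)))
    (htline : Module.finrank ℝ t.direction = 1)
    (htan : Metric.infDist M_C (t : Set (EuclideanSpace ℝ (Fin 2))) = R_C)
    (hP1t : P1 ∈ t) (hP2t : P2 ∈ t) (hP12 : P1 ≠ P2)
    (hP1K : dist P1 M_K = R_K) (hP2K : dist P2 M_K = R_K)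
    (hd : dist M_C M_K ≠ R_K)
    (hD1 : dist M_D M_C = dist M_D P1) (hD2 : dist M_D M_C = dist M_D P2) :
    dist M_D M_K = |R_K ^ 2 - dist M_C M_K ^ 2| / (2 * R_C) := by
  have hne : (t : Set (EuclideanSpace ℝ (Fin 2))).Nonempty := ⟨P1, hP1t⟩
  haveI : Nonempty t := hne.to_subtype
  set F : EuclideanSpace ℝ (Fin 2) := ↑(EuclideanGeometry.orthogonalProjection t M_C) with hFdef
  -- dist M_C F = R_C
  have hFle : ∀ y ∈ t, dist M_C F ≤ dist M_C y := by
    intro y hy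
    have h := dist_sq_eq_dist_orthogonalProjection_sq_add_dist_orthogonalProjection_sq
      (s := t) M_C hy
    have h1 : (0:ℝ) ≤ dist y F := dist_nonneg
    have h2 : (0:ℝ) ≤ dist M_C y := dist_nonneg
    have h3 : (0:ℝ) ≤ dist M_C F := dist_nonneg
    rw [← hFdef] at h
    rw [dist_comm M_C y]
    have h4 : (0:ℝ) ≤ dist y M_C := dist_nonneg
    nlinarith [h, h4, mul_self_nonneg (dist y F)]
  have hFdist : dist M_C F = R_C := by
    rw [← htan]
    refine le_antisymm ?_ (infDist_le_dist_of_mem (orthogonalProjection_mem M_C))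
    by_contra hlt
    push_neg at hlt
    obtain ⟨y, hy, hylt⟩ := (infDist_lt_iff hne).mp hlt
    exact absurd (hFle y hy) (not_le.mpr hylt)
  -- the normal vector
  set n : EuclideanSpace ℝ (Fin 2) := M_C -ᵥ F with hndef
  have hn_norm : ‖n‖ = R_C := by
    rw [hndef, ← dist_eq_norm_vsub, hFdist]
  have hn_ne : n ≠ 0 := by
    intro h
    rw [h, norm_zero] at hn_norm
    exact absurd hn_norm.symm (ne_of_gt hRC)
  have hn_orth : n ∈ t.directionᗮ :=
    vsub_orthogonalProjection_mem_direction_orthogonal t M_C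
  -- the chord vector
  set w : EuclideanSpace ℝ (Fin 2) := P2 -ᵥ P1 with hwdef
  have hw_mem : w ∈ t.direction := AffineSubspace.vsub_mem_direction hP2t hP1t
  have hw_ne : w ≠ 0 := fun h => hP12 (vsub_eq_zero_iff_eq.mp h).symm
  have hdir : t.direction = Submodule.span ℝ {w} := by
    refine (Submodule.eq_of_le_of_finrank_le ?_ ?_).symm
    · rwa [Submodule.span_le, Set.singleton_subset_iff]
    · rw [htline, finrank_span_singleton hw_ne]
  have hnw : inner ℝ w n = (0:ℝ) := hn_orth w hw_mem
  -- the orthogonal complement of w is spanned by n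
  have hspan : (Submodule.span ℝ ({w} : Set (EuclideanSpace ℝ (Fin 2))))ᗮ
      = Submodule.span ℝ {n} := by
    refine (Submodule.eq_of_le_of_finrank_le ?_ ?_).symm
    · rw [Submodule.span_le, Set.singleton_subset_iff]
      rw [← hdir]
      exact hn_orth
    · have h2 := Submodule.finrank_add_finrank_orthogonal
        (K := Submodule.span ℝ ({w} : Set (EuclideanSpace ℝ (Fin 2)))) (𝕜 := ℝ)
      rw [finrank_span_singleton hw_ne, finrank_euclideanSpace_fin] at h2
      rw [finrank_span_singleton hn_ne]
      omega
  have hperp : ∀ v : EuclideanSpace ℝ (Fin 2), inner ℝ w v = (0:ℝ) → ∃ r : ℝ, v = r • n := by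
    intro v hv
    have hvmem : v ∈ Submodule.span ℝ ({n} : Set (EuclideanSpace ℝ (Fin 2))) := by
      rw [← hspan]
      exact (Submodule.mem_orthogonal_singleton_iff_inner_right).mpr hv
    obtain ⟨r, hr⟩ := Submodule.mem_span_singleton.mp hvmem
    exact ⟨r, hr.symm⟩
  -- midpoint
  set Q : EuclideanSpace ℝ (Fin 2) := midpoint ℝ P1 P2 with hQdef
  have hQmemt : Q ∈ t := by
    have h1 : Q -ᵥ P1 ∈ t.direction := by
      rw [hQdef, midpoint_vsub_left]
      exact Submodule.smul_mem _ _ (AffineSubspace.vsub_mem_direction hP2t hP1t)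
    have := AffineSubspace.vadd_mem_of_mem_direction h1 hP1t
    rwa [vsub_vadd] at this
  -- coefficients
  obtain ⟨b, hb⟩ : ∃ r : ℝ, M_K -ᵥ Q = r • n := by
    apply hperp
    have h1 : dist P1 Q = dist P2 Q := by
      rw [hQdef, dist_left_midpoint, dist_right_midpoint, dist_comm P1 P2]
    have h2 : dist P1 M_K = dist P2 M_K := hP1K.trans hP2K.symm
    have := inner_vsub_vsub_of_dist_eq_of_dist_eq h1 h2
    rwa [real_inner_comm] at this
  obtain ⟨c, hc⟩ : ∃ r : ℝ, M_D -ᵥ M_K = r • n := by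
    apply hperp
    have h1 : dist P1 M_K = dist P2 M_K := hP1K.trans hP2K.symm
    have h2 : dist P1 M_D = dist P2 M_D := by
      rw [dist_comm P1 M_D, dist_comm P2 M_D, ← hD1, ← hD2]
    have := inner_vsub_vsub_of_dist_eq_of_dist_eq h1 h2
    rwa [real_inner_comm] at this
  obtain ⟨a, ha⟩ : ∃ r : ℝ, F -ᵥ Q = r • w := by
    have h1 : F -ᵥ Q ∈ t.direction :=
      AffineSubspace.vsub_mem_direction (orthogonalProjection_mem M_C) hQmemt
    rw [hdir, Submodule.mem_span_singleton] at h1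
    obtain ⟨r, hr⟩ := h1
    exact ⟨r, hr.symm⟩
  -- explicit representations of the points
  have hP1Q : P1 -ᵥ Q = (-(1/2) : ℝ) • w := by
    rw [hQdef, left_vsub_midpoint, hwdef]
    have : (⅟2 : ℝ) = (1/2 : ℝ) := by norm_num
    rw [this]
    simp only [vsub_eq_sub]
    module
  -- explicit point representations
  have hb' : M_K = b • n + Q := by
    rw [vsub_eq_sub, sub_eq_iff_eq_add] at hb; exact hb
  have hD' : M_D = c • n + (b • n + Q) := by
    rw [vsub_eq_sub, sub_eq_iff_eq_add] at hc; rw [hc, hb']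
  have ha' : F = a • w + Q := by
    rw [vsub_eq_sub, sub_eq_iff_eq_add] at ha; exact ha
  have hP1' : P1 = (-(1/2) : ℝ) • w + Q := by
    rw [vsub_eq_sub, sub_eq_iff_eq_add] at hP1Q; exact hP1Q
  have hC' : M_C = n + (a • w + Q) := by
    rw [hndef, vsub_eq_sub]
    rw [← ha']
    abel
  -- the key norm computation
  have key : ∀ α β : ℝ, ‖α • w + β • n‖^2 = α^2 * ‖w‖^2 + β^2 * R_C^2 := by
    intro α β
    rw [norm_add_sq_real, real_inner_smul_left, real_inner_smul_right, hnw]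
    rw [norm_smul, norm_smul, hn_norm]
    simp only [mul_pow, Real.norm_eq_abs, sq_abs, mul_zero]
    ring
  -- distance computations
  have d1 : R_K^2 = (1/2:ℝ)^2 * ‖w‖^2 + b^2 * R_C^2 := by
    rw [← hP1K, dist_eq_norm, hP1', hb']
    rw [show ((-(1/2):ℝ) • w + Q) - (b • n + Q) = (-(1/2):ℝ) • w + (-b) • n by module]
    rw [key]; try ring
  have d2 : dist M_D M_C ^ 2 = a^2 * ‖w‖^2 + (b+c-1)^2 * R_C^2 := by
    rw [dist_eq_norm, hD', hC']
    rw [show (c • n + (b • n + Q)) - (n + (a • w + Q)) = (-a) • w + (b+c-1) • n by module]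
    rw [key]; try ring
  have d3 : dist M_D P1 ^ 2 = (1/2:ℝ)^2 * ‖w‖^2 + (b+c)^2 * R_C^2 := by
    rw [dist_eq_norm, hD', hP1']
    rw [show (c • n + (b • n + Q)) - ((-(1/2):ℝ) • w + Q) = ((1/2):ℝ) • w + (b+c) • n by module]
    rw [key]; try ring
  have d4 : dist M_C M_K ^ 2 = a^2 * ‖w‖^2 + (1-b)^2 * R_C^2 := by
    rw [dist_eq_norm, hC', hb']
    rw [show (n + (a • w + Q)) - (b • n + Q) = a • w + (1-b) • n by module]
    rw [key]; try ring
  have d5 : dist M_D M_K = |c| * R_C := by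
    rw [dist_eq_norm, hD', hb']
    rw [show (c • n + (b • n + Q)) - (b • n + Q) = c • n by module]
    rw [norm_smul, hn_norm, Real.norm_eq_abs]
  have e2 : a^2 * ‖w‖^2 + (b+c-1)^2 * R_C^2 = (1/2:ℝ)^2 * ‖w‖^2 + (b+c)^2 * R_C^2 := by
    rw [← d2, ← d3, hD1]
  have hval : R_K^2 - dist M_C M_K^2 = -(2*c*R_C^2) := by
    linear_combination d1 - d4 - e2
  rw [d5, hval, abs_neg]
  have habs : |2 * c * R_C ^ 2| = 2 * |c| * R_C ^ 2 := by
    rw [abs_mul, abs_mul, abs_two, abs_of_pos (pow_pos hRC 2)]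
  rw [habs, eq_div_iff (by positivity : 2 * R_C ≠ 0)]
  ring
end

section
/- Let a triangle have circumcircle K (center M_K, radius R_K) and incircle C (center M_C, radius R_C), with d = dist(M_C, M_K). Then the three excenters of the triangle lie on a common circle E whose center M_E satisfies M_K = (M_C + M_E)/2 and whose radius is R_E = (R_K² − d²)/R_C. -/
open EuclideanGeometry Metric

private lemma dist_sq_coord (x y : EuclideanSpace ℝ (Fin 2)) :
    dist x y ^ 2 = (x 0 - y 0) ^ 2 + (x 1 - y 1) ^ 2 := by
  rw [EuclideanSpace.dist_eq, Real.sq_sqrt (by positivity)]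
  simp [Fin.sum_univ_two, Real.dist_eq, sq_abs]

private lemma inner_coord (x y : EuclideanSpace ℝ (Fin 2)) :
    (inner ℝ x y : ℝ) = x 0 * y 0 + x 1 * y 1 := by
  simp [PiLp.inner_apply, RCLike.inner_apply, Fin.sum_univ_two, mul_comm]

private lemma sign_neg' (rc L c D : ℝ) (hrc : 0 < rc) (hL : 0 < L)
    (h2 : c ^ 2 = (rc * L) ^ 2) (hcd : 0 < c * D) (hD : D < 0) : c = -1 * (rc * L) := by
  have hb : 0 < rc * L := mul_pos hrc hL
  have hc : c < 0 := by nlinarith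
  have h3 : (c - rc * L) * (c + rc * L) = 0 := by linear_combination h2
  rcases mul_eq_zero.mp h3 with h' | h'
  · nlinarith
  · linarith

private lemma sign_pos' (rc L c D : ℝ) (hrc : 0 < rc) (hL : 0 < L)
    (h2 : c ^ 2 = (rc * L) ^ 2) (hcd : 0 < c * D) (hD : 0 < D) : c = 1 * (rc * L) := by
  have hb : 0 < rc * L := mul_pos hrc hL
  have hc : 0 < c := by nlinarith
  have h3 : (c - rc * L) * (c + rc * L) = 0 := by linear_combination h2
  rcases mul_eq_zero.mp h3 with h' | h'
  · linarith
  · nlinarith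

private lemma sq_eq_of' (a b : ℝ) (h : a ^ 2 = b ^ 2) : a = b ∨ a = -b := by
  have h2 : (a - b) * (a + b) = 0 := by linear_combination h
  rcases mul_eq_zero.mp h2 with h' | h'
  · left; linarith
  · right; linarith

/-- Points of `affineSpan ℝ {p₁, p₂}` are of the form `p₁ + t • (p₂ - p₁)`. -/
private lemma mem_line_param {p₁ p₂ : EuclideanSpace ℝ (Fin 2)} {y : EuclideanSpace ℝ (Fin 2)}
    (hy : y ∈ (affineSpan ℝ ({p₁, p₂} : Set (EuclideanSpace ℝ (Fin 2))) :
      Set (EuclideanSpace ℝ (Fin 2)))) :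
    ∃ t : ℝ, y 0 = p₁ 0 + t * (p₂ 0 - p₁ 0) ∧ y 1 = p₁ 1 + t * (p₂ 1 - p₁ 1) := by
  have hy' : (y -ᵥ p₁) +ᵥ p₁ ∈ affineSpan ℝ ({p₁, p₂} : Set (EuclideanSpace ℝ (Fin 2))) := by
    rwa [vsub_vadd]
  obtain ⟨t, ht⟩ := (vadd_left_mem_affineSpan_pair).mp hy'
  refine ⟨t, ?_, ?_⟩
  · have h0 := congrArg (· 0) ht
    simp only [PiLp.smul_apply, PiLp.sub_apply, smul_eq_mul] at h0
    have : t * (p₂ 0 - p₁ 0) = y 0 - p₁ 0 := h0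
    linarith
  · have h1 := congrArg (· 1) ht
    simp only [PiLp.smul_apply, PiLp.sub_apply, smul_eq_mul] at h1
    have : t * (p₂ 1 - p₁ 1) = y 1 - p₁ 1 := h1
    linarith

/-- The incircle-tangency distance condition in coordinates. -/
private lemma infDist_line_sq {p₁ p₂ m : EuclideanSpace ℝ (Fin 2)} {rc : ℝ}
    (hL : 0 < (p₂ 0 - p₁ 0) ^ 2 + (p₂ 1 - p₁ 1) ^ 2)
    (h : Metric.infDist m
      (affineSpan ℝ ({p₁, p₂} : Set (EuclideanSpace ℝ (Fin 2))) :
        Set (EuclideanSpace ℝ (Fin 2))) = rc) :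
    ((p₂ 0 - p₁ 0) * (m 1 - p₁ 1) - (p₂ 1 - p₁ 1) * (m 0 - p₁ 0)) ^ 2
      = rc ^ 2 * ((p₂ 0 - p₁ 0) ^ 2 + (p₂ 1 - p₁ 1) ^ 2) := by
  set ux : ℝ := p₂ 0 - p₁ 0 with hux
  set uy : ℝ := p₂ 1 - p₁ 1 with huy
  set L2 : ℝ := ux ^ 2 + uy ^ 2 with hL2
  set cc : ℝ := ux * (m 1 - p₁ 1) - uy * (m 0 - p₁ 0) with hcc
  set t0 : ℝ := (ux * (m 0 - p₁ 0) + uy * (m 1 - p₁ 1)) / L2 with ht0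
  set foot : EuclideanSpace ℝ (Fin 2) := AffineMap.lineMap p₁ p₂ t0 with hfoot
  have hfmem : foot ∈ (affineSpan ℝ ({p₁, p₂} : Set (EuclideanSpace ℝ (Fin 2))) :
      Set (EuclideanSpace ℝ (Fin 2))) := AffineMap.lineMap_mem_affineSpan_pair t0 p₁ p₂
  have hfc0 : foot 0 = p₁ 0 + t0 * ux := by
    rw [hfoot]
    simp only [AffineMap.lineMap_apply, PiLp.add_apply, PiLp.smul_apply, PiLp.sub_apply,
      smul_eq_mul, vsub_eq_sub, vadd_eq_add]
    ring
  have hfc1 : foot 1 = p₁ 1 + t0 * uy := by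
    rw [hfoot]
    simp only [AffineMap.lineMap_apply, PiLp.add_apply, PiLp.smul_apply, PiLp.sub_apply,
      smul_eq_mul, vsub_eq_sub, vadd_eq_add]
    ring
  have hfd : dist m foot ^ 2 = cc ^ 2 / L2 := by
    rw [dist_sq_coord, hfc0, hfc1, ht0]
    field_simp
    ring
  -- every point of the line is at distance at least `dist m foot`
  have hmin : ∀ y ∈ (affineSpan ℝ ({p₁, p₂} : Set (EuclideanSpace ℝ (Fin 2))) :
      Set (EuclideanSpace ℝ (Fin 2))), dist m foot ≤ dist m y := by
    intro y hy
    obtain ⟨t, hy0, hy1⟩ := mem_line_param hy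
    have hyd : dist m y ^ 2 = (m 0 - (p₁ 0 + t * ux)) ^ 2 + (m 1 - (p₁ 1 + t * uy)) ^ 2 := by
      rw [dist_sq_coord, hy0, hy1]
    have hsq : dist m foot ^ 2 ≤ dist m y ^ 2 := by
      rw [hfd, hyd, div_le_iff₀ hL, hcc, hL2]
      nlinarith [sq_nonneg (ux * (m 0 - p₁ 0 - t * ux) + uy * (m 1 - p₁ 1 - t * uy))]
    have := Real.sqrt_le_sqrt hsq
    rwa [Real.sqrt_sq dist_nonneg, Real.sqrt_sq dist_nonneg] at this
  have h1 : rc ≤ dist m foot := by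
    rw [← h]; exact Metric.infDist_le_dist_of_mem hfmem
  have h2 : dist m foot ≤ rc := by
    by_contra hcon
    push_neg at hcon
    have hlt : Metric.infDist m
        (affineSpan ℝ ({p₁, p₂} : Set (EuclideanSpace ℝ (Fin 2))) :
          Set (EuclideanSpace ℝ (Fin 2))) < dist m foot := by rw [h]; exact hcon
    obtain ⟨y, hy, hylt⟩ := (Metric.infDist_lt_iff ⟨p₁, subset_affineSpan ℝ _ (by simp)⟩).mp hlt
    exact absurd hylt (not_lt.mpr (hmin y hy))
  have heq : dist m foot = rc := le_antisymm h2 h1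
  have : rc ^ 2 = cc ^ 2 / L2 := by rw [← heq, hfd]
  field_simp at this
  linarith [this]

private lemma sameside_cross {p₁ p₂ m v : EuclideanSpace ℝ (Fin 2)}
    (h : (affineSpan ℝ ({p₁, p₂} : Set (EuclideanSpace ℝ (Fin 2)))).SSameSide m v) :
    ∃ r₁ r₂ : ℝ, 0 < r₁ ∧ 0 < r₂ ∧
      r₁ * ((p₂ 0 - p₁ 0) * (m 1 - p₁ 1) - (p₂ 1 - p₁ 1) * (m 0 - p₁ 0))
        = r₂ * ((p₂ 0 - p₁ 0) * (v 1 - p₁ 1) - (p₂ 1 - p₁ 1) * (v 0 - p₁ 0)) := by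
  obtain ⟨⟨q₁, hq₁, q₂, hq₂, hray⟩, hm, hv⟩ := h
  have hx : m -ᵥ q₁ ≠ 0 := fun hh => hm (vsub_eq_zero_iff_eq.mp hh ▸ hq₁)
  have hy : v -ᵥ q₂ ≠ 0 := fun hh => hv (vsub_eq_zero_iff_eq.mp hh ▸ hq₂)
  obtain ⟨r₁, r₂, hr₁, hr₂, heq⟩ := hray.exists_pos hx hy
  obtain ⟨t₁, h10, h11⟩ := mem_line_param (by exact hq₁)
  obtain ⟨t₂, h20, h21⟩ := mem_line_param (by exact hq₂)
  refine ⟨r₁, r₂, hr₁, hr₂, ?_⟩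
  have ex : r₁ * (m 0 - q₁ 0) = r₂ * (v 0 - q₂ 0) := by
    have h0 := congrArg (· 0) heq
    simp only [PiLp.smul_apply, PiLp.sub_apply, smul_eq_mul, vsub_eq_sub] at h0
    exact h0
  have ey : r₁ * (m 1 - q₁ 1) = r₂ * (v 1 - q₂ 1) := by
    have h1 := congrArg (· 1) heq
    simp only [PiLp.smul_apply, PiLp.sub_apply, smul_eq_mul, vsub_eq_sub] at h1
    exact h1
  linear_combination (p₂ 0 - p₁ 0) * ey - (p₂ 1 - p₁ 1) * ex
    + r₁ * (p₂ 0 - p₁ 0) * h11 - r₁ * (p₂ 1 - p₁ 1) * h10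
    - r₂ * (p₂ 0 - p₁ 0) * h21 + r₂ * (p₂ 1 - p₁ 1) * h20

set_option maxHeartbeats 1600000 in
private lemma incenter_inside
    (a0x a0y a1x a1y a2x a2y mx my kx ky rc rk p q r c0 c1 c2 D : ℝ)
    (hp : 0 < p) (hq : 0 < q) (hr : 0 < r) (hrc : 0 < rc)
    (hc0d : c0 = (a1x - a0x) * (my - a0y) - (a1y - a0y) * (mx - a0x))
    (hc1d : c1 = (a2x - a1x) * (my - a1y) - (a2y - a1y) * (mx - a1x))
    (hc2d : c2 = (a0x - a2x) * (my - a2y) - (a0y - a2y) * (mx - a2x))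
    (hDd : D = (a1x - a0x) * (a2y - a1y) - (a1y - a0y) * (a2x - a1x))
    (hp2 : p ^ 2 = (a1x - a0x) ^ 2 + (a1y - a0y) ^ 2)
    (hq2 : q ^ 2 = (a2x - a1x) ^ 2 + (a2y - a1y) ^ 2)
    (hr2 : r ^ 2 = (a0x - a2x) ^ 2 + (a0y - a2y) ^ 2)
    (hK0 : (a0x - kx) ^ 2 + (a0y - ky) ^ 2 = rk ^ 2)
    (hK1 : (a1x - kx) ^ 2 + (a1y - ky) ^ 2 = rk ^ 2)
    (hK2 : (a2x - kx) ^ 2 + (a2y - ky) ^ 2 = rk ^ 2)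
    (hc0 : c0 ^ 2 = rc ^ 2 * ((a1x - a0x) ^ 2 + (a1y - a0y) ^ 2))
    (hc1 : c1 ^ 2 = rc ^ 2 * ((a2x - a1x) ^ 2 + (a2y - a1y) ^ 2))
    (hc2 : c2 ^ 2 = rc ^ 2 * ((a0x - a2x) ^ 2 + (a0y - a2y) ^ 2))
    (hs0 : 0 < c0 * D) (hs1 : 0 < c1 * D) (hs2 : 0 < c2 * D) :
    (mx - kx) ^ 2 + (my - ky) ^ 2 < rk ^ 2 := by
  have hDne : D ≠ 0 := by
    intro hh
    rw [hh, mul_zero] at hs0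
    exact lt_irrefl 0 hs0
  have hc0' : c0 ^ 2 = (rc * p) ^ 2 := by linear_combination hc0 - rc ^ 2 * hp2
  have hc1' : c1 ^ 2 = (rc * q) ^ 2 := by linear_combination hc1 - rc ^ 2 * hq2
  have hc2' : c2 ^ 2 = (rc * r) ^ 2 := by linear_combination hc2 - rc ^ 2 * hr2
  have hsum : c0 + c1 + c2 = D := by linear_combination hc0d + hc1d + hc2d - hDd
  obtain ⟨σ, hσ0, hσ1, hσ2⟩ : ∃ σ : ℝ, c0 = σ * (rc * p) ∧ c1 = σ * (rc * q) ∧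
      c2 = σ * (rc * r) := by
    rcases lt_or_gt_of_ne hDne with hD | hD
    · exact ⟨-1, sign_neg' rc p c0 D hrc hp hc0' hs0 hD,
        sign_neg' rc q c1 D hrc hq hc1' hs1 hD, sign_neg' rc r c2 D hrc hr hc2' hs2 hD⟩
    · exact ⟨1, sign_pos' rc p c0 D hrc hp hc0' hs0 hD,
        sign_pos' rc q c1 D hrc hq hc1' hs1 hD, sign_pos' rc r c2 D hrc hr hc2' hs2 hD⟩
  have hS : σ * (rc * (p + q + r)) = D := by
    linear_combination (-1 : ℝ) * hσ0 - hσ1 - hσ2 + hsum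
  have E0 : (a1x - a0x) * ((p + q + r) * my - (q * a0y + r * a1y + p * a2y))
      - (a1y - a0y) * ((p + q + r) * mx - (q * a0x + r * a1x + p * a2x)) = 0 := by
    linear_combination (p + q + r) * hσ0 - (p + q + r) * hc0d + p * hS + p * hDd
  have E1 : (a2x - a1x) * ((p + q + r) * my - (q * a0y + r * a1y + p * a2y))
      - (a2y - a1y) * ((p + q + r) * mx - (q * a0x + r * a1x + p * a2x)) = 0 := by
    linear_combination (p + q + r) * hσ1 - (p + q + r) * hc1d + q * hS + q * hDd
  have hbx : (p + q + r) * mx = q * a0x + r * a1x + p * a2x := by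
    have hx : D * ((p + q + r) * mx - (q * a0x + r * a1x + p * a2x)) = 0 := by
      linear_combination (a2x - a1x) * E0 - (a1x - a0x) * E1
        + ((p + q + r) * mx - (q * a0x + r * a1x + p * a2x)) * hDd
    rcases mul_eq_zero.mp hx with h' | h'
    · exact absurd h' hDne
    · linarith only [h']
  have hby : (p + q + r) * my = q * a0y + r * a1y + p * a2y := by
    have hy : D * ((p + q + r) * my - (q * a0y + r * a1y + p * a2y)) = 0 := by
      linear_combination (a2y - a1y) * E0 - (a1y - a0y) * E1
        + ((p + q + r) * my - (q * a0y + r * a1y + p * a2y)) * hDd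
    rcases mul_eq_zero.mp hy with h' | h'
    · exact absurd h' hDne
    · linarith only [h']
  have key : (p + q + r) ^ 2 * ((mx - kx) ^ 2 + (my - ky) ^ 2)
      = rk ^ 2 * (p + q + r) ^ 2 - p * q * r * (p + q + r) := by
    linear_combination
      ((p + q + r) * (mx - kx) + (q * (a0x - kx) + r * (a1x - kx) + p * (a2x - kx))) * hbx
      + ((p + q + r) * (my - ky) + (q * (a0y - ky) + r * (a1y - ky) + p * (a2y - ky))) * hby
      + q * (p + q + r) * hK0 + r * (p + q + r) * hK1 + p * (p + q + r) * hK2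
      + q * r * hp2 + r * p * hq2 + p * q * hr2
  have hpr : 0 < p * q * r * (p + q + r) := by positivity
  have heq2 : (p + q + r) ^ 2 * (rk ^ 2 - ((mx - kx) ^ 2 + (my - ky) ^ 2))
      = p * q * r * (p + q + r) := by linear_combination -key
  by_contra hcon
  push_neg at hcon
  have hnp : (p + q + r) ^ 2 * (rk ^ 2 - ((mx - kx) ^ 2 + (my - ky) ^ 2)) ≤ 0 :=
    mul_nonpos_of_nonneg_of_nonpos (by positivity) (by linarith only [hcon])
  linarith only [heq2, hpr, hnp]

set_option maxHeartbeats 1600000 in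
private lemma excircle_radius (ax ay bx by' mx my kx ky nx ny rc rk : ℝ)
    (hrc : 0 < rc)
    (hl : 0 < (bx - ax) ^ 2 + (by' - ay) ^ 2)
    (hcc : ((bx - ax) * (my - ay) - (by' - ay) * (mx - ax)) ^ 2
      = rc ^ 2 * ((bx - ax) ^ 2 + (by' - ay) ^ 2))
    (hk0 : (ax - kx) ^ 2 + (ay - ky) ^ 2 = rk ^ 2)
    (hk1 : (bx - kx) ^ 2 + (by' - ky) ^ 2 = rk ^ 2)
    (hn1 : (nx - ax) * (mx - ax) + (ny - ay) * (my - ay) = 0)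
    (hn2 : (nx - bx) * (mx - bx) + (ny - by') * (my - by') = 0) :
    ((nx - (2 * kx - mx)) ^ 2 + (ny - (2 * ky - my)) ^ 2) * rc ^ 2
      = (rk ^ 2 - ((mx - kx) ^ 2 + (my - ky) ^ 2)) ^ 2 := by
  have e1 : (bx - ax) * ((nx + mx) / 2 - kx) + (by' - ay) * ((ny + my) / 2 - ky) = 0 := by
    linear_combination (1 / 2 : ℝ) * hn1 - (1 / 2 : ℝ) * hn2 - (1 / 2 : ℝ) * hk0
      + (1 / 2 : ℝ) * hk1
  have e2 : (mx - ax) * ((nx + mx) / 2 - kx) + (my - ay) * ((ny + my) / 2 - ky)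
      = (((mx - kx) ^ 2 + (my - ky) ^ 2) - rk ^ 2) / 2 := by
    linear_combination (1 / 2 : ℝ) * hn1 - (1 / 2 : ℝ) * hk0
  have e3x : ((bx - ax) * (my - ay) - (by' - ay) * (mx - ax)) * ((nx + mx) / 2 - kx)
      = ((((mx - kx) ^ 2 + (my - ky) ^ 2) - rk ^ 2) / 2) * (-(by' - ay)) := by
    linear_combination (-(by' - ay)) * e2 + (my - ay) * e1
  have e3y : ((bx - ax) * (my - ay) - (by' - ay) * (mx - ax)) * ((ny + my) / 2 - ky)
      = ((((mx - kx) ^ 2 + (my - ky) ^ 2) - rk ^ 2) / 2) * (bx - ax) := by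
    linear_combination (bx - ax) * e2 - (mx - ax) * e1
  have e4 : ((bx - ax) * (my - ay) - (by' - ay) * (mx - ax)) ^ 2
        * (((nx + mx) / 2 - kx) ^ 2 + ((ny + my) / 2 - ky) ^ 2)
      = ((((mx - kx) ^ 2 + (my - ky) ^ 2) - rk ^ 2) / 2) ^ 2
        * ((bx - ax) ^ 2 + (by' - ay) ^ 2) := by
    linear_combination
      (((bx - ax) * (my - ay) - (by' - ay) * (mx - ax)) * ((nx + mx) / 2 - kx)
        + ((((mx - kx) ^ 2 + (my - ky) ^ 2) - rk ^ 2) / 2) * (-(by' - ay))) * e3x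
      + (((bx - ax) * (my - ay) - (by' - ay) * (mx - ax)) * ((ny + my) / 2 - ky)
        + ((((mx - kx) ^ 2 + (my - ky) ^ 2) - rk ^ 2) / 2) * (bx - ax)) * e3y
  have e5' : ((bx - ax) ^ 2 + (by' - ay) ^ 2)
        * (rc ^ 2 * (((nx + mx) / 2 - kx) ^ 2 + ((ny + my) / 2 - ky) ^ 2))
      = ((bx - ax) ^ 2 + (by' - ay) ^ 2)
        * (((((mx - kx) ^ 2 + (my - ky) ^ 2) - rk ^ 2) / 2) ^ 2) := by
    linear_combination e4 - (((nx + mx) / 2 - kx) ^ 2 + ((ny + my) / 2 - ky) ^ 2) * hcc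
  have e5 := mul_left_cancel₀ (ne_of_gt hl) e5'
  linear_combination 4 * e5

set_option maxHeartbeats 1600000 in
/-- The three excenters of a triangle lie on a circle `E` with center `M_E` such that the
circumcenter `M_K` is the midpoint of the incenter `M_C` and `M_E`, and whose radius is
`(R_K² - d²)/R_C`.  The excenter `N i` is characterized as the intersection of the external
bisectors at `A i` and `A (i+1)` (the external bisector at a vertex is the perpendicular
through the vertex to the internal bisector, which passes through `M_C`). -/
theorem triangle_excenters_concyclic (A : Fin 3 → EuclideanSpace ℝ (Fin 2))
    (M_C M_K : EuclideanSpace ℝ (Fin 2)) (R_C R_K : ℝ)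
    (N : Fin 3 → EuclideanSpace ℝ (Fin 2))
    (hA : AffineIndependent ℝ A) (hRC : 0 < R_C) (hRK : 0 < R_K)
    (hK : ∀ i, dist (A i) M_K = R_K)
    (hC : ∀ i, Metric.infDist M_C
      (affineSpan ℝ ({A i, A (i + 1)} : Set (EuclideanSpace ℝ (Fin 2))) :
        Set (EuclideanSpace ℝ (Fin 2))) = R_C)
    (hCin : ∀ i, (affineSpan ℝ ({A i, A (i + 1)} : Set (EuclideanSpace ℝ (Fin 2)))).SSameSide
      M_C (A (i + 2)))
    (hN : ∀ i, inner ℝ (N i - A i) (M_C - A i) = (0 : ℝ) ∧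
      inner ℝ (N i - A (i + 1)) (M_C - A (i + 1)) = (0 : ℝ)) :
    ∃ M_E : EuclideanSpace ℝ (Fin 2), M_K = midpoint ℝ M_C M_E ∧
      ∀ i, dist (N i) M_E = (R_K ^ 2 - dist M_C M_K ^ 2) / R_C := by
  have h2ne : ∀ i : Fin 3, i ≠ i + 1 := by decide
  have hAne : ∀ i : Fin 3, A i ≠ A (i + 1) := fun i h => absurd (hA.injective h) (h2ne i)
  have hL2 : ∀ i : Fin 3, 0 < (A (i + 1) 0 - A i 0) ^ 2 + (A (i + 1) 1 - A i 1) ^ 2 := by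
    intro i
    have h := dist_sq_coord (A (i + 1)) (A i)
    have hp := dist_pos.mpr (Ne.symm (hAne i))
    nlinarith [h, hp]
  have hKc : ∀ i : Fin 3, (A i 0 - M_K 0) ^ 2 + (A i 1 - M_K 1) ^ 2 = R_K ^ 2 := by
    intro i
    have h := dist_sq_coord (A i) M_K
    rw [hK i] at h
    linarith only [h]
  have hNc1 : ∀ i : Fin 3,
      (N i 0 - A i 0) * (M_C 0 - A i 0) + (N i 1 - A i 1) * (M_C 1 - A i 1) = 0 := by
    intro i
    have h := (hN i).1
    rw [inner_coord] at h
    simpa [PiLp.sub_apply] using h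
  have hNc2 : ∀ i : Fin 3,
      (N i 0 - A (i + 1) 0) * (M_C 0 - A (i + 1) 0)
        + (N i 1 - A (i + 1) 1) * (M_C 1 - A (i + 1) 1) = 0 := by
    intro i
    have h := (hN i).2
    rw [inner_coord] at h
    simpa [PiLp.sub_apply] using h
  have hcc : ∀ i : Fin 3,
      ((A (i + 1) 0 - A i 0) * (M_C 1 - A i 1) - (A (i + 1) 1 - A i 1) * (M_C 0 - A i 0)) ^ 2
        = R_C ^ 2 * ((A (i + 1) 0 - A i 0) ^ 2 + (A (i + 1) 1 - A i 1) ^ 2) :=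
    fun i => infDist_line_sq (hL2 i) (hC i)
  have hsd : ∀ i : Fin 3,
      0 < ((A (i + 1) 0 - A i 0) * (M_C 1 - A i 1) - (A (i + 1) 1 - A i 1) * (M_C 0 - A i 0))
        * ((A (i + 1) 0 - A i 0) * (A (i + 2) 1 - A i 1)
          - (A (i + 1) 1 - A i 1) * (A (i + 2) 0 - A i 0)) := by
    intro i
    obtain ⟨r₁, r₂, hr₁, hr₂, hcr⟩ := sameside_cross (hCin i)
    have h2 : 0 < ((A (i + 1) 0 - A i 0) * (M_C 1 - A i 1)
        - (A (i + 1) 1 - A i 1) * (M_C 0 - A i 0)) ^ 2 := by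
      rw [hcc i]
      exact mul_pos (pow_pos hRC 2) (hL2 i)
    have h3 : r₂ * (((A (i + 1) 0 - A i 0) * (M_C 1 - A i 1)
          - (A (i + 1) 1 - A i 1) * (M_C 0 - A i 0))
        * ((A (i + 1) 0 - A i 0) * (A (i + 2) 1 - A i 1)
          - (A (i + 1) 1 - A i 1) * (A (i + 2) 0 - A i 0)))
        = r₁ * ((A (i + 1) 0 - A i 0) * (M_C 1 - A i 1)
          - (A (i + 1) 1 - A i 1) * (M_C 0 - A i 0)) ^ 2 := by
      linear_combination (-((A (i + 1) 0 - A i 0) * (M_C 1 - A i 1)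
        - (A (i + 1) 1 - A i 1) * (M_C 0 - A i 0))) * hcr
    have h4 : 0 < r₂ * (((A (i + 1) 0 - A i 0) * (M_C 1 - A i 1)
          - (A (i + 1) 1 - A i 1) * (M_C 0 - A i 0))
        * ((A (i + 1) 0 - A i 0) * (A (i + 2) 1 - A i 1)
          - (A (i + 1) 1 - A i 1) * (A (i + 2) 0 - A i 0))) := by
      rw [h3]
      exact mul_pos hr₁ h2
    by_contra hcon
    push_neg at hcon
    have h5 := mul_nonpos_of_nonneg_of_nonpos hr₂.le hcon
    linarith only [h4, h5]
  -- global fact: the incenter lies strictly inside the circumcircle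
  have i1 : (0 : Fin 3) + 1 = 1 := by decide
  have i2 : (1 : Fin 3) + 1 = 2 := by decide
  have i3 : (2 : Fin 3) + 1 = 0 := by decide
  have j1 : (0 : Fin 3) + 2 = 2 := by decide
  have j2 : (1 : Fin 3) + 2 = 0 := by decide
  have j3 : (2 : Fin 3) + 2 = 1 := by decide
  have hgt : (M_C 0 - M_K 0) ^ 2 + (M_C 1 - M_K 1) ^ 2 < R_K ^ 2 := by
    have hcc0 := hcc 0; rw [i1] at hcc0
    have hcc1 := hcc 1; rw [i2] at hcc1
    have hcc2 := hcc 2; rw [i3] at hcc2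
    have hsd0 := hsd 0; rw [i1, j1] at hsd0
    have hsd1 := hsd 1; rw [i2, j2] at hsd1
    have hsd2 := hsd 2; rw [i3, j3] at hsd2
    have hAne0 := hAne 0; rw [i1] at hAne0
    have hAne1 := hAne 1; rw [i2] at hAne1
    have hAne2 := hAne 2; rw [i3] at hAne2
    have hp : (0:ℝ) < dist (A 0) (A 1) := dist_pos.mpr hAne0
    have hq : (0:ℝ) < dist (A 1) (A 2) := dist_pos.mpr hAne1
    have hr : (0:ℝ) < dist (A 2) (A 0) := dist_pos.mpr hAne2
    have hp2 : dist (A 0) (A 1) ^ 2 = (A 1 0 - A 0 0) ^ 2 + (A 1 1 - A 0 1) ^ 2 := by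
      rw [dist_sq_coord]; ring
    have hq2 : dist (A 1) (A 2) ^ 2 = (A 2 0 - A 1 0) ^ 2 + (A 2 1 - A 1 1) ^ 2 := by
      rw [dist_sq_coord]; ring
    have hr2 : dist (A 2) (A 0) ^ 2 = (A 0 0 - A 2 0) ^ 2 + (A 0 1 - A 2 1) ^ 2 := by
      rw [dist_sq_coord]; ring
    refine incenter_inside (A 0 0) (A 0 1) (A 1 0) (A 1 1) (A 2 0) (A 2 1)
      (M_C 0) (M_C 1) (M_K 0) (M_K 1) R_C R_K
      (dist (A 0) (A 1)) (dist (A 1) (A 2)) (dist (A 2) (A 0)) _ _ _ _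
      hp hq hr hRC rfl rfl rfl rfl hp2 hq2 hr2 (hKc 0) (hKc 1) (hKc 2)
      hcc0 hcc1 hcc2 ?_ ?_ ?_
    · exact lt_of_lt_of_eq hsd0 (by ring)
    · exact lt_of_lt_of_eq hsd1 (by ring)
    · exact lt_of_lt_of_eq hsd2 (by ring)
  have hd2eq : dist M_C M_K ^ 2 = (M_C 0 - M_K 0) ^ 2 + (M_C 1 - M_K 1) ^ 2 :=
    dist_sq_coord M_C M_K
  refine ⟨(2 : ℝ) • M_K - M_C, ?_, ?_⟩
  · rw [midpoint_eq_smul_add, invOf_eq_inv]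
    module
  · intro i
    have hm0 : ((2 : ℝ) • M_K - M_C) 0 = 2 * M_K 0 - M_C 0 := by
      simp [PiLp.sub_apply, PiLp.smul_apply]
    have hm1 : ((2 : ℝ) • M_K - M_C) 1 = 2 * M_K 1 - M_C 1 := by
      simp [PiLp.sub_apply, PiLp.smul_apply]
    have hsq := excircle_radius (A i 0) (A i 1) (A (i + 1) 0) (A (i + 1) 1)
      (M_C 0) (M_C 1) (M_K 0) (M_K 1) (N i 0) (N i 1) R_C R_K
      hRC (hL2 i) (hcc i) (hKc i) (hKc (i + 1)) (hNc1 i) (hNc2 i)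
    have hdist : dist (N i) ((2 : ℝ) • M_K - M_C) ^ 2
        = (N i 0 - (2 * M_K 0 - M_C 0)) ^ 2 + (N i 1 - (2 * M_K 1 - M_C 1)) ^ 2 := by
      rw [dist_sq_coord, hm0, hm1]
    have hval : 0 < (R_K ^ 2 - ((M_C 0 - M_K 0) ^ 2 + (M_C 1 - M_K 1) ^ 2)) / R_C :=
      div_pos (by linarith only [hgt]) hRC
    have hsq2 : dist (N i) ((2 : ℝ) • M_K - M_C) ^ 2
        = ((R_K ^ 2 - ((M_C 0 - M_K 0) ^ 2 + (M_C 1 - M_K 1) ^ 2)) / R_C) ^ 2 := by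
      rw [hdist]
      field_simp
      linear_combination hsq
    have hfac : (dist (N i) ((2 : ℝ) • M_K - M_C)
          - (R_K ^ 2 - ((M_C 0 - M_K 0) ^ 2 + (M_C 1 - M_K 1) ^ 2)) / R_C)
        * (dist (N i) ((2 : ℝ) • M_K - M_C)
          + (R_K ^ 2 - ((M_C 0 - M_K 0) ^ 2 + (M_C 1 - M_K 1) ^ 2)) / R_C) = 0 := by
      linear_combination hsq2
    rw [hd2eq]
    rcases mul_eq_zero.mp hfac with h' | h'
    · linarith only [h']
    · have hd0 : 0 ≤ dist (N i) ((2 : ℝ) • M_K - M_C) := dist_nonneg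
      linarith only [h', hd0, hval]
end

section
/- In the configuration of the previous excircle-center quadrilateral: the angle of the quadrilateral M1 M2 M3 M4 at M1 plus the angle at M3 equals π (which implies concyclicity). Precisely, with α_i the interior angles of the convex quadrilateral A1 A2 A3 A4, the angle at M1 equals (α1 + α2)/2 and the angle at M3 equals (α3 + α4)/2, and these sum to π since α1 + α2 + α3 + α4 = 2π. -/
open EuclideanGeometry Metric Real

noncomputable instance : Fact (Module.finrank ℝ (EuclideanSpace ℝ (Fin 2)) = 2) :=
  ⟨finrank_euclideanSpace_fin⟩
noncomputable instance : Module.Oriented ℝ (EuclideanSpace ℝ (Fin 2)) (Fin 2) :=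
  ⟨Module.Basis.orientation (EuclideanSpace.basisFun (Fin 2) ℝ).toBasis⟩

local notation "V2" => EuclideanSpace ℝ (Fin 2)

variable {V : Type*} [NormedAddCommGroup V] [InnerProductSpace ℝ V]

lemma infDist_line_eq (P X B : V) (h : X ≠ B) :
    Metric.infDist P (affineSpan ℝ ({X, B} : Set V) : Set V)
      = dist P B * Real.sin (∠ P B X) := by
  set v := P - B with hv
  set w := X - B with hw
  have hw0 : w ≠ 0 := sub_ne_zero.2 h
  have hwn : ‖w‖ ≠ 0 := norm_ne_zero_iff.2 hw0
  have hwpos : (0:ℝ) < ‖w‖ := norm_pos_iff.2 hw0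
  -- angle rewrite
  have hang : ∠ P B X = InnerProductGeometry.angle v w := rfl
  -- CS
  have hcs : (inner ℝ v w : ℝ) * (inner ℝ v w : ℝ) ≤ ‖v‖^2 * ‖w‖^2 := by
    have := abs_real_inner_le_norm v w
    nlinarith [abs_nonneg ((inner ℝ v w : ℝ)), le_abs_self ((inner ℝ v w : ℝ)), neg_abs_le ((inner ℝ v w : ℝ))]
  set N : ℝ := ‖v‖^2 * ‖w‖^2 - (inner ℝ v w : ℝ) * (inner ℝ v w : ℝ) with hN
  have hN0 : 0 ≤ N := by linarith
  have hrhs : dist P B * Real.sin (∠ P B X) = Real.sqrt N / ‖w‖ := by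
    rw [hang, dist_eq_norm, mul_comm]
    have := InnerProductGeometry.sin_angle_mul_norm_mul_norm v w
    rw [real_inner_self_eq_norm_sq, real_inner_self_eq_norm_sq] at this
    rw [← hN] at this
    have h2 : Real.sin (InnerProductGeometry.angle v w) * ‖v‖ = Real.sqrt N / ‖w‖ := by
      field_simp at this ⊢
      nlinarith [this]
    simpa [hv] using h2
  rw [hrhs]
  have hmem : ∀ q : V, q ∈ (affineSpan ℝ ({X, B} : Set V) : Set V) →
      ∃ t : ℝ, q = t • w + B := by
    intro q hq
    rw [Set.pair_comm] at hq
    rw [SetLike.mem_coe, ← AffineSubspace.vsub_right_mem_direction_iff_mem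
      (left_mem_affineSpan_pair ℝ B X), direction_affineSpan, mem_vectorSpan_pair_rev] at hq
    obtain ⟨t, ht⟩ := hq
    refine ⟨t, ?_⟩
    have h2 : t • w = q - B := by rw [hw]; simpa [vsub_eq_sub] using ht
    rw [h2]; abel
  have hdist : ∀ t : ℝ, dist P (t • w + B) = Real.sqrt (‖v - t • w‖^2) := by
    intro t
    rw [dist_eq_norm, Real.sqrt_sq (norm_nonneg _)]
    congr 1
    rw [hv]; abel
  have hsq : ∀ t : ℝ, ‖v - t • w‖^2 = ‖v‖^2 - 2*t*(inner ℝ v w : ℝ) + t^2*‖w‖^2 := by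
    intro t
    rw [norm_sub_sq_real, real_inner_smul_right, norm_smul]
    simp [mul_pow]
    ring
  have key : Real.sqrt N / ‖w‖ = Real.sqrt (N / ‖w‖^2) := by
    rw [Real.sqrt_div hN0, Real.sqrt_sq (norm_nonneg _)]
  refine le_antisymm ?_ ?_
  · -- use the foot q₀
    set t₀ : ℝ := (inner ℝ v w : ℝ) / ‖w‖^2 with ht₀
    have hq₀mem : t₀ • w + B ∈ (affineSpan ℝ ({X, B} : Set V) : Set V) := by
      rw [Set.pair_comm]
      have := smul_vsub_vadd_mem_affineSpan_pair t₀ B X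
      simpa [hw, vsub_eq_sub, vadd_eq_add] using this
    refine le_trans (Metric.infDist_le_dist_of_mem hq₀mem) ?_
    rw [hdist, key]
    apply le_of_eq
    congr 1
    rw [hsq]
    field_simp [ht₀, hN]
    rw [ht₀, hN]; field_simp; ring
  · rw [key]
    have hne : Nonempty ((affineSpan ℝ ({X, B} : Set V) : Set V)) :=
      ⟨⟨B, right_mem_affineSpan_pair ℝ X B⟩⟩
    rw [Metric.infDist_eq_iInf]
    apply le_ciInf
    rintro ⟨q, hq⟩
    obtain ⟨t, rfl⟩ := hmem q hq
    · 
      rw [hdist]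
      apply Real.sqrt_le_sqrt
      rw [hsq, div_le_iff₀ (by positivity)]
      nlinarith [sq_nonneg (t * ‖w‖^2 - (inner ℝ v w : ℝ))]

lemma sin_abs_eq {x : ℝ} (h : |x| ≤ π) : Real.sin |x| = |Real.sin x| := by
  rcases le_or_gt 0 x with hx | hx
  · rw [abs_of_nonneg hx, abs_of_nonneg
      (Real.sin_nonneg_of_nonneg_of_le_pi hx (by rwa [abs_of_nonneg hx] at h))]
  · have hx' : -x ≤ π := by rwa [abs_of_neg hx] at h
    rw [abs_of_neg hx]
    have h0 : 0 ≤ Real.sin (-x) := Real.sin_nonneg_of_nonneg_of_le_pi (by linarith) hx'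
    rw [Real.sin_neg] at h0 ⊢
    rw [abs_of_nonpos (by linarith)]

lemma half_of_sin_eq {a b : ℝ} (ha : 0 < a) (ha' : a < π) (hb : 0 < b) (hb' : b < π)
    (h : Real.sin (a + b) = Real.sin b) : b = (π - a) / 2 := by
  have hs : Real.sin (a + b) - Real.sin b = 0 := by rw [h]; ring
  rw [Real.sin_sub_sin] at hs
  have h1 : Real.sin ((a + b - b) / 2) > 0 := by
    apply Real.sin_pos_of_pos_of_lt_pi <;> [skip; skip] <;> ring_nf <;> nlinarith [Real.pi_pos]
  have h2 : Real.cos ((a + b + b) / 2) = 0 := by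
    rcases mul_eq_zero.1 hs with h' | h'
    · rcases mul_eq_zero.1 h' with h'' | h''
      · norm_num at h''
      · exact absurd h'' (ne_of_gt h1)
    · exact h'
  rw [Real.cos_eq_zero_iff] at h2
  obtain ⟨k, hk⟩ := h2
  have hπ := Real.pi_pos
  have hk0 : (0:ℝ) < 2 * k + 1 := by nlinarith
  have hk3 : (2 * k + 1 : ℝ) < 3 := by nlinarith
  have hk0' : (0:ℤ) < 2 * k + 1 := by exact_mod_cast hk0
  have hk3' : (2 * k + 1 : ℤ) < 3 := by exact_mod_cast hk3
  have : k = 0 := by omega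
  subst this
  norm_num at hk
  nlinarith [hk]

lemma angle_pos_lt_pi_of_sign_ne_zero {p1 p2 p3 : V2} (h : (∡ p1 p2 p3).sign ≠ 0) :
    0 < ∠ p1 p2 p3 ∧ ∠ p1 p2 p3 < π := by
  have h1 : p1 ≠ p2 := left_ne_of_oangle_sign_ne_zero h
  have h3 : p3 ≠ p2 := right_ne_of_oangle_sign_ne_zero h
  rw [Real.Angle.sign_ne_zero_iff] at h
  constructor
  · rcases (angle_nonneg p1 p2 p3).lt_or_eq with h' | h'
    · exact h'
    · exact absurd ((oangle_eq_zero_iff_angle_eq_zero h1 h3).2 h'.symm) h.1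
  · rcases (angle_le_pi p1 p2 p3).lt_or_eq with h' | h'
    · exact h'
    · exact absurd (oangle_eq_pi_iff_angle_eq_pi.2 h') h.2

lemma bisect {X B C P : V2} {r : ℝ} (hr : 0 < r)
    (hX : X ∉ affineSpan ℝ ({B, C} : Set V2))
    (hC : C ∉ affineSpan ℝ ({X, B} : Set V2))
    (h1 : Metric.infDist P (affineSpan ℝ ({X, B} : Set V2) : Set V2) = r)
    (h2 : Metric.infDist P (affineSpan ℝ ({B, C} : Set V2) : Set V2) = r)
    (hsame : (affineSpan ℝ ({X, B} : Set V2)).SSameSide P C)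
    (hopp : (affineSpan ℝ ({B, C} : Set V2)).SOppSide P X) :
    ∠ C B P = (π - ∠ X B C) / 2 ∧ (∡ C B P).sign = (∡ X B C).sign ∧
      (∡ X B C).sign ≠ 0 := by
  have hXB : X ≠ B := by
    rintro rfl; exact hX (left_mem_affineSpan_pair ℝ X C)
  have hCB : C ≠ B := by
    rintro rfl; exact hC (right_mem_affineSpan_pair ℝ X C)
  have hPB : P ≠ B := by
    rintro rfl
    rw [Metric.infDist_zero_of_mem
      (by exact_mod_cast right_mem_affineSpan_pair ℝ X P)] at h1
    exact absurd h1.symm (ne_of_gt hr)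
  -- distance equations
  have e1 : dist P B * Real.sin (∠ P B X) = r := by rw [← infDist_line_eq P X B hXB]; exact h1
  have e2 : dist P B * Real.sin (∠ P B C) = r := by
    rw [← infDist_line_eq P C B hCB, Set.pair_comm C B]; exact h2
  have hdPB : (0:ℝ) < dist P B := dist_pos.2 hPB
  have hsin1 : 0 < Real.sin (∠ P B X) := by nlinarith [Real.sin_nonneg_of_nonneg_of_le_pi (angle_nonneg P B X) (angle_le_pi P B X)]
  have hsin2 : 0 < Real.sin (∠ P B C) := by nlinarith [Real.sin_nonneg_of_nonneg_of_le_pi (angle_nonneg P B C) (angle_le_pi P B C)]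
  have hsineq : Real.sin (∠ X B P) = Real.sin (∠ C B P) := by
    rw [angle_comm X B P, angle_comm C B P]
    nlinarith
  -- noncollinearity
  have hσ : (∡ X B C).sign ≠ 0 := by
    intro h0
    rw [oangle_sign_eq_zero_iff_collinear] at h0
    have hcol := h0
    exact hX (hcol.mem_affineSpan_of_mem_of_ne (p₁ := B) (p₂ := C) (p₃ := X)
      (by simp) (by simp) (by simp) hCB.symm)
  -- sign claims
  have claim1 : (∡ X B P).sign = (∡ X B C).sign := by
    have h := hsame.oangle_sign_eq (left_mem_affineSpan_pair ℝ X B)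
      (right_mem_affineSpan_pair ℝ X B)
    -- h : (∡ X C B).sign = (∡ X P B).sign
    have hP' := oangle_swap₂₃_sign X B P
    have hC' := oangle_swap₂₃_sign X B C
    rw [← hP', ← hC'] at h
    exact neg_injective h.symm
  have claim2 : (∡ C B P).sign = (∡ X B C).sign := by
    have h := hopp.oangle_sign_eq_neg (left_mem_affineSpan_pair ℝ B C)
      (right_mem_affineSpan_pair ℝ B C)
    -- h : (∡ B X C).sign = -(∡ B P C).sign
    have e3 : (∡ B X C).sign = -(∡ X B C).sign := (oangle_swap₁₂_sign X B C).symm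
    have e4 : (∡ B P C).sign = (∡ C B P).sign := by
      have a1 := oangle_swap₁₃_sign B P C   -- -(∡ B P C).sign = (∡ C P B).sign
      have a2 := oangle_swap₂₃_sign C B P   -- -(∡ C B P).sign = (∡ C P B).sign
      rw [← a2] at a1
      exact neg_injective a1
    rw [e3, e4] at h
    exact (neg_injective h).symm
  refine ⟨?_, claim2, hσ⟩
  set α := ∠ X B C with hα
  set β := ∠ C B P with hβ
  obtain ⟨hα0, hαπ⟩ := angle_pos_lt_pi_of_sign_ne_zero hσ
  have hcb : (∡ C B P).sign ≠ 0 := by rw [claim2]; exact hσ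
  obtain ⟨hβ0, hβπ⟩ := angle_pos_lt_pi_of_sign_ne_zero hcb
  have hadd : ∡ X B C + ∡ C B P = ∡ X B P := oangle_add hXB hCB hPB
  -- unoriented sin of X B P equals |Angle.sin (∡ X B P)|
  have habs : Real.sin (∠ X B P) = |Real.Angle.sin (∡ X B P)| := by
    rw [angle_eq_abs_oangle_toReal hXB hPB, sin_abs_eq (Real.Angle.abs_toReal_le_pi _),
      Real.Angle.sin_toReal]
  have hfin : Real.sin (α + β) = Real.sin β ∧ 0 < Real.sin (α + β) := by
    have hc : (∡ X B C).sign = 1 ∨ (∡ X B C).sign = -1 := by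
      cases h : (∡ X B C).sign <;> simp_all
    rcases hc with hs | hs
    · have hXC : ∡ X B C = (α : Real.Angle) := oangle_eq_angle_of_sign_eq_one hs
      have hCP : ∡ C B P = (β : Real.Angle) :=
        oangle_eq_angle_of_sign_eq_one (claim2.trans hs)
      have hXP : ∡ X B P = ((α + β : ℝ) : Real.Angle) := by
        rw [← hadd, hXC, hCP, Real.Angle.coe_add]
      have hsgn : (∡ X B P).sign = 1 := claim1.trans hs
      rw [Real.Angle.sign, hXP, Real.Angle.sin_coe, sign_eq_one_iff] at hsgn
      have : Real.sin (∠ X B P) = Real.sin (α + β) := by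
        rw [habs, hXP, Real.Angle.sin_coe, abs_of_pos hsgn]
      exact ⟨by rw [← this, hsineq], hsgn⟩
    · have hXC : ∡ X B C = ((-α : ℝ) : Real.Angle) := by
        rw [oangle_eq_neg_angle_of_sign_eq_neg_one hs, Real.Angle.coe_neg]
      have hCP : ∡ C B P = ((-β : ℝ) : Real.Angle) := by
        rw [oangle_eq_neg_angle_of_sign_eq_neg_one (claim2.trans hs), Real.Angle.coe_neg]
      have hXP : ∡ X B P = ((-(α + β) : ℝ) : Real.Angle) := by
        rw [← hadd, hXC, hCP, ← Real.Angle.coe_add]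
        congr 1
        ring
      have hsgn : (∡ X B P).sign = -1 := claim1.trans hs
      rw [Real.Angle.sign, hXP, Real.Angle.sin_coe, sign_eq_neg_one_iff] at hsgn
      rw [Real.sin_neg] at hsgn
      have hpos : 0 < Real.sin (α + β) := by linarith
      have : Real.sin (∠ X B P) = Real.sin (α + β) := by
        rw [habs, hXP, Real.Angle.sin_coe, Real.sin_neg, abs_neg, abs_of_pos hpos]
      exact ⟨by rw [← this, hsineq], hpos⟩
  exact half_of_sin_eq hα0 hαπ hβ0 hβπ hfin.1

lemma between_excenters {X B C P Q : V2} (hXB : X ≠ B) (hCB : C ≠ B) (hPB : P ≠ B)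
    (hQB : Q ≠ B) (hσ : (∡ X B C).sign ≠ 0)
    (hP : ∠ C B P = (π - ∠ X B C) / 2) (hPs : (∡ C B P).sign = (∡ X B C).sign)
    (hQ : ∠ X B Q = (π - ∠ X B C) / 2) (hQs : (∡ X B Q).sign = -(∡ X B C).sign) :
    Sbtw ℝ Q B P := by
  rw [← oangle_eq_pi_iff_sbtw]
  have hadd1 : ∡ Q B X + ∡ X B C = ∡ Q B C := oangle_add hQB hXB hCB
  have hadd2 : ∡ Q B C + ∡ C B P = ∡ Q B P := oangle_add hQB hCB hPB
  have hrev : ∡ Q B X = -∡ X B Q := (oangle_rev X B Q).symm ▸ (oangle_rev Q B X) ▸ rfl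
  set α := ∠ X B C with hα
  have hc : (∡ X B C).sign = 1 ∨ (∡ X B C).sign = -1 := by
    cases h : (∡ X B C).sign <;> simp_all
  rcases hc with hs | hs
  · have hXC : ∡ X B C = (α : Real.Angle) := oangle_eq_angle_of_sign_eq_one hs
    have hCP : ∡ C B P = ((π - α)/2 : ℝ) := by
      rw [oangle_eq_angle_of_sign_eq_one (hPs.trans hs), hP]
    have hXQ : ∡ X B Q = ((-((π - α)/2) : ℝ) : Real.Angle) := by
      have : (∡ X B Q).sign = -1 := by rw [hQs, hs]
      rw [oangle_eq_neg_angle_of_sign_eq_neg_one this, hQ, Real.Angle.coe_neg]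
    rw [← hadd2, ← hadd1, hrev, hXQ, hXC, hCP, Real.Angle.coe_neg, neg_neg,
      ← Real.Angle.coe_add, ← Real.Angle.coe_add]
    congr 1
    ring
  · have hXC : ∡ X B C = ((-α : ℝ) : Real.Angle) := by
      rw [oangle_eq_neg_angle_of_sign_eq_neg_one hs, Real.Angle.coe_neg]
    have hCP : ∡ C B P = ((-((π - α)/2) : ℝ) : Real.Angle) := by
      rw [oangle_eq_neg_angle_of_sign_eq_neg_one (hPs.trans hs), hP, Real.Angle.coe_neg]
    have hXQ : ∡ X B Q = (((π - α)/2 : ℝ) : Real.Angle) := by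
      have : (∡ X B Q).sign = 1 := by rw [hQs, hs]; rfl
      rw [oangle_eq_angle_of_sign_eq_one this, hQ]
    rw [← hadd2, ← hadd1, hrev, hXQ, hXC, hCP, ← Real.Angle.coe_neg,
      ← Real.Angle.coe_add, ← Real.Angle.coe_add]
    have : (-((π - α)/2) + -α + -((π - α)/2) : ℝ) = -π := by ring
    rw [this, Real.Angle.coe_neg, Real.Angle.neg_coe_pi]

lemma quad_angle_sum {a0 a1 a2 a3 : V2}
    (h10 : a1 ≠ a0) (h20 : a2 ≠ a0) (h30 : a3 ≠ a0)
    (h21 : a2 ≠ a1) (h32 : a3 ≠ a2)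
    (hs0 : (∡ a3 a0 a1).sign ≠ 0) (hs1 : (∡ a0 a1 a2).sign ≠ 0)
    (hs2 : (∡ a1 a2 a3).sign ≠ 0) (hs3 : (∡ a2 a3 a0).sign ≠ 0)
    (e01 : (∡ a3 a0 a1).sign = (∡ a0 a1 a2).sign)
    (e12 : (∡ a0 a1 a2).sign = (∡ a1 a2 a3).sign)
    (e23 : (∡ a1 a2 a3).sign = (∡ a2 a3 a0).sign) :
    ∠ a3 a0 a1 + ∠ a0 a1 a2 + ∠ a1 a2 a3 + ∠ a2 a3 a0 = 2 * π := by
  have t1 : ∡ a0 a1 a2 + ∡ a1 a2 a0 + ∡ a2 a0 a1 = (π : Real.Angle) :=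
    oangle_add_oangle_add_oangle_eq_pi h10 h21 h20.symm
  have t2 : ∡ a2 a3 a0 + ∡ a3 a0 a2 + ∡ a0 a2 a3 = (π : Real.Angle) :=
    oangle_add_oangle_add_oangle_eq_pi h32 h30.symm h20
  have sp1 : ∡ a3 a0 a2 + ∡ a2 a0 a1 = ∡ a3 a0 a1 := oangle_add h30 h20 h10
  have sp2 : ∡ a1 a2 a0 + ∡ a0 a2 a3 = ∡ a1 a2 a3 := oangle_add h21.symm h20.symm h32
  have total : ∡ a3 a0 a1 + ∡ a0 a1 a2 + ∡ a1 a2 a3 + ∡ a2 a3 a0 = 0 := by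
    rw [← sp1, ← sp2]
    have h : ∡ a3 a0 a2 + ∡ a2 a0 a1 + ∡ a0 a1 a2 + (∡ a1 a2 a0 + ∡ a0 a2 a3) + ∡ a2 a3 a0
        = (∡ a0 a1 a2 + ∡ a1 a2 a0 + ∡ a2 a0 a1) + (∡ a2 a3 a0 + ∡ a3 a0 a2 + ∡ a0 a2 a3) := by
      abel
    rw [h, t1, t2, ← Real.Angle.coe_add]
    have h2 : (π + π : ℝ) = 2 * π := by ring
    rw [h2, Real.Angle.coe_two_pi]
  obtain ⟨b00, b01⟩ := angle_pos_lt_pi_of_sign_ne_zero hs0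
  obtain ⟨b10, b11⟩ := angle_pos_lt_pi_of_sign_ne_zero hs1
  obtain ⟨b20, b21⟩ := angle_pos_lt_pi_of_sign_ne_zero hs2
  obtain ⟨b30, b31⟩ := angle_pos_lt_pi_of_sign_ne_zero hs3
  have hk : ∃ k : ℤ, ∠ a3 a0 a1 + ∠ a0 a1 a2 + ∠ a1 a2 a3 + ∠ a2 a3 a0 = 2 * π * k := by
    have hc : (∡ a3 a0 a1).sign = 1 ∨ (∡ a3 a0 a1).sign = -1 := by
      cases h : (∡ a3 a0 a1).sign <;> simp_all
    rcases hc with hs | hs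
    · rw [oangle_eq_angle_of_sign_eq_one hs,
        oangle_eq_angle_of_sign_eq_one (e01 ▸ hs),
        oangle_eq_angle_of_sign_eq_one ((e01.trans e12) ▸ hs),
        oangle_eq_angle_of_sign_eq_one ((e01.trans (e12.trans e23)) ▸ hs),
        ← Real.Angle.coe_add, ← Real.Angle.coe_add, ← Real.Angle.coe_add,
        ← Real.Angle.coe_zero, Real.Angle.angle_eq_iff_two_pi_dvd_sub] at total
      obtain ⟨k, hk⟩ := total
      exact ⟨k, by linarith⟩
    · rw [oangle_eq_neg_angle_of_sign_eq_neg_one hs,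
        oangle_eq_neg_angle_of_sign_eq_neg_one (e01 ▸ hs),
        oangle_eq_neg_angle_of_sign_eq_neg_one ((e01.trans e12) ▸ hs),
        oangle_eq_neg_angle_of_sign_eq_neg_one ((e01.trans (e12.trans e23)) ▸ hs),
        ← Real.Angle.coe_neg, ← Real.Angle.coe_neg, ← Real.Angle.coe_neg,
        ← Real.Angle.coe_neg, ← Real.Angle.coe_add, ← Real.Angle.coe_add,
        ← Real.Angle.coe_add, ← Real.Angle.coe_zero,
        Real.Angle.angle_eq_iff_two_pi_dvd_sub] at total
      obtain ⟨k, hk⟩ := total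
      refine ⟨-k, ?_⟩
      push_cast
      linarith
  obtain ⟨k, hk⟩ := hk
  clear total t1 t2 sp1 sp2 e01 e12 e23 hs0 hs1 hs2 hs3
  have hπ := Real.pi_pos
  have hk1 : (0:ℝ) < k := by nlinarith
  have hk2 : (k:ℝ) < 2 := by nlinarith
  have hk1' : (0:ℤ) < k := by exact_mod_cast hk1
  have hk2' : (k:ℤ) < 2 := by exact_mod_cast hk2
  have : k = 1 := by omega
  rw [this] at hk
  rw [hk]
  push_cast
  ring

/-- In the excircle-center quadrilateral `M1 M2 M3 M4` of a convex quadrilateral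
`A1 A2 A3 A4`, the angle at `M1` is `(α1 + α2)/2`, the angle at `M3` is `(α3 + α4)/2`,
and these two angles sum to `π`. -/
theorem quadrilateral_excenters_opposite_angles
    (A M : Fin 4 → EuclideanSpace ℝ (Fin 2)) (r : Fin 4 → ℝ)
    (hconv : ∀ i : Fin 4,
      (affineSpan ℝ ({A i, A (i + 1)} : Set (EuclideanSpace ℝ (Fin 2)))).SSameSide
        (A (i + 2)) (A (i + 3)))
    (hr : ∀ i, 0 < r i)
    (htan : ∀ i : Fin 4,
      Metric.infDist (M i) (affineSpan ℝ ({A (i - 1), A i} : Set (EuclideanSpace ℝ (Fin 2))) :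
        Set (EuclideanSpace ℝ (Fin 2))) = r i ∧
      Metric.infDist (M i) (affineSpan ℝ ({A i, A (i + 1)} : Set (EuclideanSpace ℝ (Fin 2))) :
        Set (EuclideanSpace ℝ (Fin 2))) = r i ∧
      Metric.infDist (M i) (affineSpan ℝ ({A (i + 1), A (i + 2)} : Set (EuclideanSpace ℝ (Fin 2))) :
        Set (EuclideanSpace ℝ (Fin 2))) = r i)
    (hside : ∀ i : Fin 4,
      (affineSpan ℝ ({A i, A (i + 1)} : Set (EuclideanSpace ℝ (Fin 2)))).SOppSide
        (M i) (A (i + 2)) ∧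
      (affineSpan ℝ ({A (i - 1), A i} : Set (EuclideanSpace ℝ (Fin 2)))).SSameSide
        (M i) (A (i + 1)) ∧
      (affineSpan ℝ ({A (i + 1), A (i + 2)} : Set (EuclideanSpace ℝ (Fin 2)))).SSameSide
        (M i) (A i)) :
    ∠ (M 3) (M 0) (M 1) = (∠ (A 3) (A 0) (A 1) + ∠ (A 0) (A 1) (A 2)) / 2 ∧
    ∠ (M 1) (M 2) (M 3) = (∠ (A 1) (A 2) (A 3) + ∠ (A 2) (A 3) (A 0)) / 2 ∧
    ∠ (M 3) (M 0) (M 1) + ∠ (M 1) (M 2) (M 3) = π := by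
  have c0 := hconv 0; have c1 := hconv 1; have c2 := hconv 2; have c3 := hconv 3
  have t0 := htan 0; have t1 := htan 1; have t2 := htan 2; have t3 := htan 3
  have s0 := hside 0; have s1 := hside 1; have s2 := hside 2; have s3 := hside 3
  simp only [show ((0:Fin 4)+1)=1 by decide, show ((0:Fin 4)+2)=2 by decide,
    show ((0:Fin 4)+3)=3 by decide, show ((1:Fin 4)+1)=2 by decide,
    show ((1:Fin 4)+2)=3 by decide, show ((1:Fin 4)+3)=0 by decide,
    show ((2:Fin 4)+1)=3 by decide, show ((2:Fin 4)+2)=0 by decide,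
    show ((2:Fin 4)+3)=1 by decide, show ((3:Fin 4)+1)=0 by decide,
    show ((3:Fin 4)+2)=1 by decide, show ((3:Fin 4)+3)=2 by decide,
    show ((0:Fin 4)-1)=3 by decide, show ((1:Fin 4)-1)=0 by decide,
    show ((2:Fin 4)-1)=1 by decide, show ((3:Fin 4)-1)=2 by decide]
    at c0 c1 c2 c3 t0 t1 t2 t3 s0 s1 s2 s3
  have pc : ∀ x y : EuclideanSpace ℝ (Fin 2),
      affineSpan ℝ ({x, y} : Set (EuclideanSpace ℝ (Fin 2)))
        = affineSpan ℝ ({y, x} : Set (EuclideanSpace ℝ (Fin 2))) := fun x y => by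
    rw [Set.pair_comm]
  -- distinctness of the A's
  have h10 : A 1 ≠ A 0 := by
    intro h; apply c1.right_notMem; rw [← h]; exact left_mem_affineSpan_pair ℝ _ _
  have h20 : A 2 ≠ A 0 := by
    intro h; apply c0.left_notMem; rw [h]; exact left_mem_affineSpan_pair ℝ _ _
  have h30 : A 3 ≠ A 0 := by
    intro h; apply c0.right_notMem; rw [h]; exact left_mem_affineSpan_pair ℝ _ _
  have h21 : A 2 ≠ A 1 := by
    intro h; apply c0.left_notMem; rw [h]; exact right_mem_affineSpan_pair ℝ _ _
  have h32 : A 3 ≠ A 2 := by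
    intro h; apply c1.left_notMem; rw [h]; exact right_mem_affineSpan_pair ℝ _ _
  -- M i distinct from relevant vertices
  have hmna : ∀ {Z x y : EuclideanSpace ℝ (Fin 2)} {ρ : ℝ}, 0 < ρ →
      Metric.infDist Z (affineSpan ℝ ({x, y} : Set (EuclideanSpace ℝ (Fin 2))) :
        Set (EuclideanSpace ℝ (Fin 2))) = ρ → Z ≠ x ∧ Z ≠ y := by
    intro Z x y ρ hρ h
    constructor <;> rintro rfl
    · rw [Metric.infDist_zero_of_mem
        (by exact_mod_cast left_mem_affineSpan_pair ℝ Z y)] at h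
      linarith
    · rw [Metric.infDist_zero_of_mem
        (by exact_mod_cast right_mem_affineSpan_pair ℝ x Z)] at h
      linarith
  have hM00 : M 0 ≠ A 0 := (hmna (hr 0) t0.2.1).1
  have hM01 : M 0 ≠ A 1 := (hmna (hr 0) t0.2.1).2
  have hM11 : M 1 ≠ A 1 := (hmna (hr 1) t1.2.1).1
  have hM12 : M 1 ≠ A 2 := (hmna (hr 1) t1.2.1).2
  have hM22 : M 2 ≠ A 2 := (hmna (hr 2) t2.2.1).1
  have hM23 : M 2 ≠ A 3 := (hmna (hr 2) t2.2.1).2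
  have hM33 : M 3 ≠ A 3 := (hmna (hr 3) t3.2.1).1
  have hM30 : M 3 ≠ A 0 := (hmna (hr 3) t3.2.1).2
  -- eight bisector facts
  obtain ⟨bP0, bP0s, bσ0⟩ := bisect (hr 0) c0.right_notMem c3.left_notMem
    t0.1 t0.2.1 s0.2.1 ((s0.1).trans_sSameSide c0)
  obtain ⟨bQ0, bQ0s, -⟩ := bisect (hr 3) (pc (A 3) (A 0) ▸ c3.left_notMem)
    (pc (A 0) (A 1) ▸ c0.right_notMem) (pc (A 0) (A 1) ▸ t3.2.2)
    (pc (A 3) (A 0) ▸ t3.2.1) (pc (A 0) (A 1) ▸ s3.2.2) (pc (A 3) (A 0) ▸ s3.1)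
  obtain ⟨bP1, bP1s, bσ1⟩ := bisect (hr 1) c1.right_notMem c0.left_notMem
    t1.1 t1.2.1 s1.2.1 ((s1.1).trans_sSameSide c1)
  obtain ⟨bQ1, bQ1s, -⟩ := bisect (hr 0) (pc (A 0) (A 1) ▸ c0.left_notMem)
    (pc (A 1) (A 2) ▸ c1.right_notMem) (pc (A 1) (A 2) ▸ t0.2.2)
    (pc (A 0) (A 1) ▸ t0.2.1) (pc (A 1) (A 2) ▸ s0.2.2) (pc (A 0) (A 1) ▸ s0.1)
  obtain ⟨bP2, bP2s, bσ2⟩ := bisect (hr 2) c2.right_notMem c1.left_notMem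
    t2.1 t2.2.1 s2.2.1 ((s2.1).trans_sSameSide c2)
  obtain ⟨bQ2, bQ2s, -⟩ := bisect (hr 1) (pc (A 1) (A 2) ▸ c1.left_notMem)
    (pc (A 2) (A 3) ▸ c2.right_notMem) (pc (A 2) (A 3) ▸ t1.2.2)
    (pc (A 1) (A 2) ▸ t1.2.1) (pc (A 2) (A 3) ▸ s1.2.2) (pc (A 1) (A 2) ▸ s1.1)
  obtain ⟨bP3, bP3s, bσ3⟩ := bisect (hr 3) c3.right_notMem c2.left_notMem
    t3.1 t3.2.1 s3.2.1 ((s3.1).trans_sSameSide c3)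
  obtain ⟨bQ3, bQ3s, -⟩ := bisect (hr 2) (pc (A 2) (A 3) ▸ c2.left_notMem)
    (pc (A 3) (A 0) ▸ c3.right_notMem) (pc (A 3) (A 0) ▸ t2.2.2)
    (pc (A 2) (A 3) ▸ t2.2.1) (pc (A 3) (A 0) ▸ s2.2.2) (pc (A 2) (A 3) ▸ s2.1)
  -- betweenness
  have W0 : Sbtw ℝ (M 3) (A 0) (M 0) := by
    refine between_excenters h30 h10 hM00 hM30 bσ0 bP0 bP0s ?_ ?_
    · rw [bQ0, angle_comm (A 1) (A 0) (A 3)]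
    · rw [bQ0s, oangle_rev (A 3) (A 0) (A 1), Real.Angle.sign_neg]
  have W1 : Sbtw ℝ (M 0) (A 1) (M 1) := by
    refine between_excenters h10.symm h21 hM11 hM01 bσ1 bP1 bP1s ?_ ?_
    · rw [bQ1, angle_comm (A 2) (A 1) (A 0)]
    · rw [bQ1s, oangle_rev (A 0) (A 1) (A 2), Real.Angle.sign_neg]
  have W2 : Sbtw ℝ (M 1) (A 2) (M 2) := by
    refine between_excenters h21.symm h32 hM22 hM12 bσ2 bP2 bP2s ?_ ?_
    · rw [bQ2, angle_comm (A 3) (A 2) (A 1)]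
    · rw [bQ2s, oangle_rev (A 1) (A 2) (A 3), Real.Angle.sign_neg]
  have W3 : Sbtw ℝ (M 2) (A 3) (M 3) := by
    refine between_excenters h32.symm h30.symm hM33 hM23 bσ3 bP3 bP3s ?_ ?_
    · rw [bQ3, angle_comm (A 0) (A 3) (A 2)]
    · rw [bQ3s, oangle_rev (A 2) (A 3) (A 0), Real.Angle.sign_neg]
  -- first conjunct
  have o1 : ∡ (M 3) (M 0) (M 1) = ∡ (A 0) (M 0) (A 1) := by
    rw [W0.symm.wbtw.oangle_eq_left W0.ne_right, W1.wbtw.oangle_eq_right W1.ne_left]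
  have conv1 : ∠ (M 3) (M 0) (M 1) = ∠ (A 0) (M 0) (A 1) := by
    rw [angle_eq_abs_oangle_toReal W0.left_ne_right (W1.left_ne_right).symm,
      angle_eq_abs_oangle_toReal W0.ne_right W1.ne_left, o1]
  have tri1 := angle_add_angle_add_angle_eq_pi (p₁ := A 1) (p₂ := A 0) (M 0)
    h10.symm
  have cm1 : ∠ (M 0) (A 1) (A 0) = ∠ (A 0) (A 1) (M 0) := angle_comm _ _ _
  have cm2 : ∠ (A 2) (A 1) (A 0) = ∠ (A 0) (A 1) (A 2) := angle_comm _ _ _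
  have conj1 : ∠ (M 3) (M 0) (M 1) = (∠ (A 3) (A 0) (A 1) + ∠ (A 0) (A 1) (A 2)) / 2 := by
    rw [conv1]
    rw [cm1, bQ1, cm2] at tri1
    rw [bP0] at tri1
    linarith
  -- second conjunct
  have o2 : ∡ (M 1) (M 2) (M 3) = ∡ (A 2) (M 2) (A 3) := by
    rw [W2.symm.wbtw.oangle_eq_left W2.ne_right, W3.wbtw.oangle_eq_right W3.ne_left]
  have conv2 : ∠ (M 1) (M 2) (M 3) = ∠ (A 2) (M 2) (A 3) := by
    rw [angle_eq_abs_oangle_toReal W2.left_ne_right (W3.left_ne_right).symm,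
      angle_eq_abs_oangle_toReal W2.ne_right W3.ne_left, o2]
  have tri2 := angle_add_angle_add_angle_eq_pi (p₁ := A 3) (p₂ := A 2) (M 2)
    h32.symm
  have cm3 : ∠ (M 2) (A 3) (A 2) = ∠ (A 2) (A 3) (M 2) := angle_comm _ _ _
  have cm4 : ∠ (A 0) (A 3) (A 2) = ∠ (A 2) (A 3) (A 0) := angle_comm _ _ _
  have conj2 : ∠ (M 1) (M 2) (M 3) = (∠ (A 1) (A 2) (A 3) + ∠ (A 2) (A 3) (A 0)) / 2 := by
    rw [conv2]
    rw [cm3, bQ3, cm4] at tri2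
    rw [bP2] at tri2
    linarith
  -- angle sum of the quadrilateral
  have e01 : (∡ (A 3) (A 0) (A 1)).sign = (∡ (A 0) (A 1) (A 2)).sign := by
    have h := c0.oangle_sign_eq (left_mem_affineSpan_pair ℝ (A 0) (A 1))
      (right_mem_affineSpan_pair ℝ (A 0) (A 1))
    rw [← oangle_swap₁₂_sign (A 3) (A 0) (A 1), ← oangle_swap₂₃_sign (A 0) (A 1) (A 2)] at h
    exact neg_injective h
  have e12 : (∡ (A 0) (A 1) (A 2)).sign = (∡ (A 1) (A 2) (A 3)).sign := by
    have h := c1.oangle_sign_eq (left_mem_affineSpan_pair ℝ (A 1) (A 2))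
      (right_mem_affineSpan_pair ℝ (A 1) (A 2))
    rw [← oangle_swap₁₂_sign (A 0) (A 1) (A 2), ← oangle_swap₂₃_sign (A 1) (A 2) (A 3)] at h
    exact neg_injective h
  have e23 : (∡ (A 1) (A 2) (A 3)).sign = (∡ (A 2) (A 3) (A 0)).sign := by
    have h := c2.oangle_sign_eq (left_mem_affineSpan_pair ℝ (A 2) (A 3))
      (right_mem_affineSpan_pair ℝ (A 2) (A 3))
    rw [← oangle_swap₁₂_sign (A 1) (A 2) (A 3), ← oangle_swap₂₃_sign (A 2) (A 3) (A 0)] at h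
    exact neg_injective h
  have hsum := quad_angle_sum h10 h20 h30 h21 h32 bσ0 bσ1 bσ2 bσ3 e01 e12 e23
  exact ⟨conj1, conj2, by rw [conj1, conj2]; linarith⟩
end
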